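/- Let (π_n) be a sequence of Borel probability measures on a locally compact space S converging weak* to the Dirac mass at a point ∞ in the one-point compactification, and with π_n({∞}) = 0. Suppose G : S → B is a map into a compact metric space B and μ ∈ B is such that for every neighborhood V of μ, π_n({s ∈ S : G(s) ∉ V}) → 0 as n → ∞. Suppose moreover S = [1,∞) × I and for every ε > 0 there exists T_ε > 1 with π_n({(T,θ) ∈ [T_ε,∞) × I : G(T,θ) ∉ V}) < ε for all n. Then there exists a measurable set Z ⊆ S with lim_n π_n(Z) = 0 and G(s) → μ as s → ∞ with s ∉ Z. -/

import Mathlib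

open MeasureTheory Filter
open scoped ENNReal

set_option maxHeartbeats 1000000 in
theorem stmt11 {B : Type*} [MetricSpace B] [CompactSpace B]
    (c d : ℝ) (hcd : c ≤ d)
    (S : Set (ℝ × ℝ)) (hS : S = Set.Ici (1:ℝ) ×ˢ Set.Icc c d)
    (π : ℕ → Measure (ℝ × ℝ)) (hπprob : ∀ n, IsProbabilityMeasure (π n))
    (hπsupp : ∀ n, π n S = 1)
    (hπdirac : ∀ M : ℝ, Tendsto (fun n => π n (Set.Icc 1 M ×ˢ Set.Icc c d)) atTop (nhds 0))
    (G : ℝ × ℝ → B) (μ : B)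
    (hG : ∀ V ∈ nhds μ, Tendsto (fun n => π n {p ∈ S | G p ∉ V}) atTop (nhds 0))
    (hGunif : ∀ V ∈ nhds μ, ∀ ε : ℝ≥0∞, 0 < ε → ∃ Tε : ℝ, 1 < Tε ∧
      ∀ n, π n {p ∈ S | Tε ≤ p.1 ∧ G p ∉ V} < ε) :
    ∃ Z : Set (ℝ × ℝ), MeasurableSet Z ∧ Z ⊆ S ∧
      Tendsto (fun n => π n Z) atTop (nhds 0) ∧
      ∀ V ∈ nhds μ, ∃ T₀ : ℝ, ∀ p ∈ S, p ∉ Z → T₀ ≤ p.1 → G p ∈ V := by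
  -- a countable neighborhood basis of shrinking balls
  set V : ℕ → Set B := fun k => Metric.ball μ (1 / (k + 1 : ℝ)) with hVdef
  have hV : ∀ k, V k ∈ nhds μ := fun k =>
    Metric.ball_mem_nhds μ (by positivity)
  -- choose thresholds from hGunif
  have hpow : ∀ k : ℕ, (0 : ℝ≥0∞) < 2⁻¹ ^ k := fun k =>
    ENNReal.pow_pos (by norm_num) k
  choose t ht1 ht2 using fun k => hGunif (V k) (hV k) (2⁻¹ ^ k) (hpow k)
  -- an increasing sequence of thresholds dominating t
  set T : ℕ → ℝ := fun k => 1 + k + ∑ j ∈ Finset.range (k + 1), |t j| with hTdef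
  have hTmono : StrictMono T := by
    apply strictMono_nat_of_lt_succ
    intro k
    have h1 : ∑ j ∈ Finset.range (k + 1), |t j| ≤ ∑ j ∈ Finset.range (k + 2), |t j| := by
      apply Finset.sum_le_sum_of_subset_of_nonneg
      · exact Finset.range_subset_range.mpr (by omega)
      · intros; positivity
    simp only [hTdef]
    push_cast
    linarith
  have hTget : ∀ k, t k ≤ T k := by
    intro k
    have h1 : |t k| ≤ ∑ j ∈ Finset.range (k + 1), |t j| :=
      Finset.single_le_sum (f := fun j => |t j|) (fun j _ => abs_nonneg _)
        (Finset.self_mem_range_succ k)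
    have h2 : t k ≤ |t k| := le_abs_self _
    have h3 : (0:ℝ) ≤ 1 + k := by positivity
    simp only [hTdef]
    linarith
  have hTgek : ∀ k : ℕ, (k : ℝ) ≤ T k := by
    intro k
    have h1 : (0:ℝ) ≤ ∑ j ∈ Finset.range (k + 1), |t j| := by positivity
    simp only [hTdef]; linarith
  -- the bad sets
  set bad : ℕ → Set (ℝ × ℝ) :=
    fun k => {p | p ∈ S ∧ T k ≤ p.1 ∧ p.1 < T (k + 1) ∧ G p ∉ V k} with hbaddef
  have hbound : ∀ n k, π n (bad k) < 2⁻¹ ^ k := by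
    intro n k
    refine lt_of_le_of_lt (measure_mono ?_) (ht2 k n)
    intro p hp
    exact ⟨hp.1, le_trans (hTget k) hp.2.1, hp.2.2.2⟩
  have hbadG : ∀ k, bad k ⊆ {p ∈ S | G p ∉ V k} := by
    intro k p hp; exact ⟨hp.1, hp.2.2.2⟩
  -- measurable hulls, uniformly over n
  choose W hWsub hWmeas hWeq using fun k =>
    exists_measurable_superset_forall_eq π (bad k)
  have hSmeas : MeasurableSet S := by
    rw [hS]; exact measurableSet_Ici.prod measurableSet_Icc
  refine ⟨⋃ k, W k ∩ S, MeasurableSet.iUnion (fun k => (hWmeas k).inter hSmeas),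
    Set.iUnion_subset (fun k => Set.inter_subset_right), ?_, ?_⟩
  · -- tendsto 0
    rw [ENNReal.tendsto_atTop_zero]
    intro ε hε
    have hhalf : (0 : ℝ≥0∞) < ε / 2 := ENNReal.half_pos hε.ne'
    have hpiece : ∀ n k, π n (W k ∩ S) ≤ π n (bad k) := by
      intro n k
      calc π n (W k ∩ S) ≤ π n (W k) := measure_mono Set.inter_subset_left
        _ = π n (bad k) := hWeq k n
    -- choose K with geometric tail small
    have hgeo : ∑' k : ℕ, (2⁻¹ : ℝ≥0∞) ^ k ≠ ∞ := by
      rw [ENNReal.tsum_geometric]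
      rw [ENNReal.one_sub_inv_two]; simp
    obtain ⟨K, hK⟩ :=
      ((ENNReal.tendsto_sum_nat_add (fun k => (2⁻¹ : ℝ≥0∞) ^ k) hgeo).eventually_lt_const
        hhalf).exists
    -- head tends to 0
    have hone : ∀ k, Tendsto (fun n => π n (W k ∩ S)) atTop (nhds 0) := by
      intro k
      refine tendsto_of_tendsto_of_tendsto_of_le_of_le tendsto_const_nhds
        (hG (V k) (hV k)) (fun n => zero_le)
        (fun n => (hpiece n k).trans (measure_mono (hbadG k)))
    have hhead : Tendsto (fun n => ∑ k ∈ Finset.range K, π n (W k ∩ S)) atTop (nhds 0) := by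
      have := tendsto_finset_sum (Finset.range K) (fun k _ => hone k)
      simpa using this
    obtain ⟨N, hN⟩ := eventually_atTop.mp (hhead.eventually_lt_const hhalf)
    refine ⟨N, fun n hn => ?_⟩
    have htail : ∑' k, π n (W (k + K) ∩ S) ≤ ε / 2 := by
      refine le_trans (ENNReal.tsum_le_tsum (fun k => ?_)) hK.le
      exact (hpiece n (k + K)).trans (hbound n (k + K)).le
    have hcover : (⋃ k, W k ∩ S) ⊆
        (⋃ k ∈ Finset.range K, (W k ∩ S)) ∪ ⋃ k, (W (k + K) ∩ S) := by
      intro x hx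
      obtain ⟨k, hk⟩ := Set.mem_iUnion.mp hx
      rcases lt_or_ge k K with h | h
      · exact Or.inl (Set.mem_biUnion (Finset.mem_range.mpr h) hk)
      · exact Or.inr (Set.mem_iUnion.mpr ⟨k - K, by rwa [Nat.sub_add_cancel h]⟩)
    calc π n (⋃ k, W k ∩ S)
        ≤ π n ((⋃ k ∈ Finset.range K, (W k ∩ S)) ∪ ⋃ k, (W (k + K) ∩ S)) :=
          measure_mono hcover
      _ ≤ π n (⋃ k ∈ Finset.range K, (W k ∩ S)) + π n (⋃ k, (W (k + K) ∩ S)) :=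
          measure_union_le _ _
      _ ≤ (∑ k ∈ Finset.range K, π n (W k ∩ S)) + ∑' k, π n (W (k + K) ∩ S) :=
          add_le_add (measure_biUnion_finset_le _ _) (measure_iUnion_le _)
      _ ≤ ε / 2 + ε / 2 := add_le_add (hN n hn).le htail
      _ = ε := ENNReal.add_halves ε
  · -- convergence outside Z
    intro U hU
    obtain ⟨δ, hδpos, hball⟩ := Metric.mem_nhds_iff.mp hU
    obtain ⟨k, hk⟩ := exists_nat_one_div_lt hδpos
    refine ⟨T k, fun p hpS hpZ hpT => ?_⟩
    have hex : ∃ m, p.1 < T m := by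
      obtain ⟨m, hm⟩ := exists_nat_gt p.1
      exact ⟨m, lt_of_lt_of_le hm (hTgek m)⟩
    have hm : p.1 < T (Nat.find hex) := Nat.find_spec hex
    have hm0 : Nat.find hex ≠ 0 := by
      intro h
      rw [h] at hm
      have : T 0 ≤ T k := hTmono.monotone (Nat.zero_le k)
      linarith
    obtain ⟨j, hj⟩ : ∃ j, Nat.find hex = j + 1 :=
      ⟨Nat.find hex - 1, (Nat.succ_pred_eq_of_ne_zero hm0).symm⟩
    have hTj : T j ≤ p.1 := not_lt.mp (Nat.find_min hex (by omega))
    have hTj1 : p.1 < T (j + 1) := hj ▸ hm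
    have hkj : k ≤ j := by
      by_contra h
      push_neg at h
      have : T (j + 1) ≤ T k := hTmono.monotone (by omega)
      linarith
    have hGp : G p ∈ V j := by
      by_contra h
      exact hpZ (Set.mem_iUnion.mpr ⟨j, ⟨hWsub j ⟨hpS, hTj, hTj1, h⟩, hpS⟩⟩)
    apply hball
    have hdist : dist (G p) μ < 1 / (j + 1 : ℝ) := by
      simpa [hVdef, Metric.mem_ball] using hGp
    have hle : (1:ℝ) / (j + 1) ≤ 1 / (k + 1) := by
      apply one_div_le_one_div_of_le (by positivity)
      have : (k : ℝ) ≤ j := Nat.cast_le.mpr hkj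
      linarith
    exact Metric.mem_ball.mpr (lt_of_lt_of_le hdist (hle.trans hk.le))
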